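/- Sauer's lemma: if C is a concept class over X with VC dimension at most d, and B ⊆ X is a finite set with |B| > d ≥ 1, then |Π_C(B)| ≤ (e·|B|/d)^d. -/

import Mathlib

/-- Projection of a concept class on a finite set `B`. -/
def proj {X : Type*} (C : Set (X → Bool)) (B : Finset X) : Set (B → Bool) :=
  {g | ∃ c ∈ C, ∀ x : B, c x = g x}

/-- `C` shatters the finite set `B` if it realizes every dichotomy on `B`. -/
def Shatters {X : Type*} (C : Set (X → Bool)) (B : Finset X) : Prop :=
  ∀ g : X → Bool, ∃ c ∈ C, ∀ x ∈ B, c x = g x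

lemma sum_choose_le (n d : ℕ) (hd : 1 ≤ d) (hdn : d < n) :
    ((∑ k ∈ Finset.Iic d, n.choose k : ℕ) : ℝ) ≤ (Real.exp 1 * n / d) ^ d := by
  have hn0 : (0:ℝ) < n := by exact_mod_cast Nat.pos_of_ne_zero (by omega)
  have hd0 : (0:ℝ) < d := by exact_mod_cast hd
  set x : ℝ := d / n with hx
  have hx0 : 0 < x := by positivity
  have hx1 : x ≤ 1 := by
    rw [hx, div_le_one hn0]; exact_mod_cast hdn.le
  have key : x ^ d * ((∑ k ∈ Finset.Iic d, n.choose k : ℕ) : ℝ) ≤ (1 + x) ^ n := by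
    have h1 : x ^ d * ((∑ k ∈ Finset.Iic d, n.choose k : ℕ) : ℝ)
        ≤ ∑ k ∈ Finset.Iic d, (n.choose k : ℝ) * x ^ k := by
      rw [Nat.cast_sum, Finset.mul_sum]
      refine Finset.sum_le_sum fun k hk => ?_
      rw [mul_comm]
      refine mul_le_mul_of_nonneg_left ?_ (by positivity)
      exact pow_le_pow_of_le_one hx0.le hx1 (Finset.mem_Iic.mp hk)
    refine h1.trans ?_
    have h2 : ∑ k ∈ Finset.Iic d, (n.choose k : ℝ) * x ^ k
        ≤ ∑ k ∈ Finset.range (n + 1), (n.choose k : ℝ) * x ^ k := by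
      refine Finset.sum_le_sum_of_subset_of_nonneg ?_ (fun k _ _ => by positivity)
      intro k hk
      simp only [Finset.mem_Iic] at hk
      simp only [Finset.mem_range]
      omega
    have h3 : (1 + x) ^ n = ∑ k ∈ Finset.range (n + 1), (n.choose k : ℝ) * x ^ k := by
      rw [add_comm (1:ℝ) x, add_pow]
      exact Finset.sum_congr rfl fun k _ => by ring
    exact h2.trans_eq h3.symm
  have hexp : (1 + x) ^ n ≤ Real.exp 1 ^ d := by
    have h1 : (1 + x) ^ n ≤ Real.exp x ^ n := by
      refine pow_le_pow_left₀ (by positivity) ?_ n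
      linarith [Real.add_one_le_exp x]
    refine h1.trans ?_
    rw [← Real.exp_nat_mul, Real.exp_one_pow]
    refine Real.exp_le_exp.mpr (le_of_eq ?_)
    rw [hx]
    field_simp
  have hfinal : ((∑ k ∈ Finset.Iic d, n.choose k : ℕ) : ℝ)
      ≤ x⁻¹ ^ d * Real.exp 1 ^ d := by
    rw [inv_pow, inv_mul_eq_div, le_div_iff₀ (by positivity), mul_comm]
    exact key.trans hexp
  refine hfinal.trans (le_of_eq ?_)
  rw [← mul_pow]
  congr 1
  rw [hx]
  field_simp

theorem comb {X : Type*} (C : Set (X → Bool)) (d : ℕ)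
    (hVC : ∀ B : Finset X, Shatters C B → B.card ≤ d)
    (B : Finset X) :
    Nat.card (proj C B) ≤ ∑ k ∈ Finset.Iic d, B.card.choose k := by
  classical
  have hfin : (proj C B).Finite := Set.toFinite _
  set S : Finset (↥B → Bool) := hfin.toFinset with hS
  let φ : (↥B → Bool) → Finset ↥B := fun g => Finset.univ.filter (fun x => g x = true)
  have hφinj : Function.Injective φ := by
    intro g h hgh
    funext x
    have := Finset.ext_iff.mp hgh x
    simp only [φ, Finset.mem_filter, Finset.mem_univ, true_and] at this
    cases hg : g x <;> cases hh : h x <;> simp_all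
  set 𝒜 : Finset (Finset ↥B) := S.image φ with h𝒜
  have hcard : Nat.card (proj C B) = 𝒜.card := by
    rw [h𝒜, Finset.card_image_of_injective _ hφinj, hS,
      Set.Finite.card_toFinset, Nat.card_eq_fintype_card]
  have hvc : 𝒜.vcDim ≤ d := by
    refine Finset.sup_le fun s hs => ?_
    rw [Finset.mem_shatterer] at hs
    have hsh : Shatters C (s.image Subtype.val) := by
      intro g
      have hts : s.filter (fun x => g x.val = true) ⊆ s := Finset.filter_subset _ _
      obtain ⟨u, hu, hsu⟩ := hs hts
      obtain ⟨g', hg', rfl⟩ := Finset.mem_image.mp hu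
      have hg'' : g' ∈ proj C B := by rwa [hS, Set.Finite.mem_toFinset] at hg'
      obtain ⟨c, hc, hcg⟩ := hg''
      refine ⟨c, hc, fun x hx => ?_⟩
      obtain ⟨y, hy, rfl⟩ := Finset.mem_image.mp hx
      have h2 : (g' y = true) ↔ (g y.val = true) := by
        constructor
        · intro h
          have hm : y ∈ s ∩ φ g' := Finset.mem_inter.mpr ⟨hy, by simp [φ, h]⟩
          rw [hsu] at hm
          exact (Finset.mem_filter.mp hm).2
        · intro h
          have hm : y ∈ s.filter (fun x => g x.val = true) :=
            Finset.mem_filter.mpr ⟨hy, h⟩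
          rw [← hsu] at hm
          have := (Finset.mem_inter.mp hm).2
          simpa [φ] using this
      rw [hcg y]
      cases hgy : g' y <;> cases hgx : g y.val <;> simp_all
    have hle := hVC _ hsh
    rwa [Finset.card_image_of_injective _ Subtype.val_injective] at hle
  rw [hcard]
  calc 𝒜.card ≤ 𝒜.shatterer.card := Finset.card_le_card_shatterer 𝒜
    _ ≤ ∑ k ∈ Finset.Iic 𝒜.vcDim, (Fintype.card ↥B).choose k :=
        Finset.card_shatterer_le_sum_vcDim
    _ ≤ ∑ k ∈ Finset.Iic d, (Fintype.card ↥B).choose k :=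
        Finset.sum_le_sum_of_subset (Finset.Iic_subset_Iic.mpr hvc)
    _ = ∑ k ∈ Finset.Iic d, B.card.choose k := by rw [Fintype.card_coe]

/-- Sauer's lemma: if `VC(C) ≤ d`, `d ≥ 1`, and `|B| > d`, then
`|Π_C(B)| ≤ (e·|B|/d)^d`. -/
theorem stmt3 {X : Type*} (C : Set (X → Bool)) (d : ℕ) (hd : 1 ≤ d)
    (hVC : ∀ B : Finset X, Shatters C B → B.card ≤ d)
    (B : Finset X) (hB : d < B.card) :
    (Nat.card (proj C B) : ℝ) ≤ (Real.exp 1 * B.card / d) ^ d := by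
  calc (Nat.card (proj C B) : ℝ)
      ≤ ((∑ k ∈ Finset.Iic d, B.card.choose k : ℕ) : ℝ) := by
        exact_mod_cast comb C d hVC B
    _ ≤ (Real.exp 1 * B.card / d) ^ d := sum_choose_le B.card d hd hB
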